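/- In the model setup, for every t ≥ t_0, writing Δ = t − t_0, the membrane potential satisfies m(t) ≤ m_0·exp(−k_m Δ) + Σ_{ν∈N} e_0(ν) b_e(ν)(exp(−k_m Δ) − exp(−k_e(ν)Δ)) + Σ_{μ∈M} i_0(μ) b_i(μ)(exp(−k_m Δ) − exp(−k_i(μ)Δ)); that is, dropping all inhibitory-growth (j) terms gives an upper bound for m(t). -/

import Mathlib

open Real

lemma convex_exp_neg : ConvexOn ℝ Set.univ (fun u : ℝ => Real.exp (-u)) := by
  have := convexOn_exp.comp_affineMap (-(AffineMap.id ℝ ℝ))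
  simpa [Function.comp_def] using this

lemma key_slope {x y : ℝ} (hx : x ≠ 0) (hy : y ≠ 0) (hxy : x ≤ y) :
    (1 - Real.exp (-y)) / y ≤ (1 - Real.exp (-x)) / x := by
  have h := convex_exp_neg.secant_mono (a := 0) (x := x) (y := y)
    (Set.mem_univ _) (Set.mem_univ _) (Set.mem_univ _) hx hy hxy
  simp only [neg_zero, Real.exp_zero, sub_zero] at h
  have : -((1 - Real.exp (-x)) / x) ≤ -((1 - Real.exp (-y)) / y) := by
    rw [← neg_div, ← neg_div]; simpa [neg_sub] using h
  linarith

lemma aux_bracket (km a b Δ : ℝ) (ha : a ≠ 0) (hb : b ≠ 0) (hab : a < b) (hΔ : 0 ≤ Δ) :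
    (Real.exp (-km * Δ) - Real.exp (-(km + b) * Δ)) / b ≤
    (Real.exp (-km * Δ) - Real.exp (-(km + a) * Δ)) / a := by
  have hE : 0 < Real.exp (-km * Δ) := Real.exp_pos _
  have ea : Real.exp (-(km + a) * Δ) = Real.exp (-km * Δ) * Real.exp (-(a * Δ)) := by
    rw [← Real.exp_add]; ring_nf
  have eb : Real.exp (-(km + b) * Δ) = Real.exp (-km * Δ) * Real.exp (-(b * Δ)) := by
    rw [← Real.exp_add]; ring_nf
  rcases eq_or_lt_of_le hΔ with h0 | h0
  · simp [← h0]
  · have hk := key_slope (x := a * Δ) (y := b * Δ)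
      (mul_ne_zero ha (ne_of_gt h0)) (mul_ne_zero hb (ne_of_gt h0))
      (by nlinarith)
    rw [ea, eb]
    have e1 : (Real.exp (-km * Δ) - Real.exp (-km * Δ) * Real.exp (-(a * Δ))) / a
        = Real.exp (-km * Δ) * Δ * ((1 - Real.exp (-(a * Δ))) / (a * Δ)) := by
      field_simp
    have e2 : (Real.exp (-km * Δ) - Real.exp (-km * Δ) * Real.exp (-(b * Δ))) / b
        = Real.exp (-km * Δ) * Δ * ((1 - Real.exp (-(b * Δ))) / (b * Δ)) := by
      field_simp
    rw [e1, e2]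
    exact mul_le_mul_of_nonneg_left hk (by positivity)

/-- In the model setup, dropping all inhibitory-growth (j) terms gives an
upper bound for m(t), for every t ≥ t₀. -/
theorem stmt_12
    (t0 m0 km : ℝ) (hkm : 0 < km)
    {N M : Type} [Fintype N] [Fintype M]
    (ke ae e0 : N → ℝ)
    (ki kj ai aj i0 j0 : M → ℝ)
    (hke : ∀ ν, 0 < ke ν) (hkem : ∀ ν, ke ν ≠ km)
    (hae : ∀ ν, 0 < ae ν) (he0 : ∀ ν, 0 ≤ e0 ν)
    (hki : ∀ μ, 0 < ki μ) (hkij : ∀ μ, ki μ < kj μ)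
    (hkim : ∀ μ, ki μ ≠ km) (hkjm : ∀ μ, kj μ ≠ km)
    (hai : ∀ μ, 0 < ai μ) (haj : ∀ μ, 0 < aj μ)
    (hi0 : ∀ μ, i0 μ ≤ 0) (hj0 : ∀ μ, j0 μ ≤ 0)
    (m : ℝ → ℝ)
    (hm : ∀ t : ℝ, m t =
      m0 * Real.exp (-km * (t - t0))
      + ∑ ν, e0 ν * (ae ν / (ke ν - km)) *
          (Real.exp (-km * (t - t0)) - Real.exp (-ke ν * (t - t0)))
      + ∑ μ, i0 μ * (ai μ / (ki μ - km)) *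
          (Real.exp (-km * (t - t0)) - Real.exp (-ki μ * (t - t0)))
      + ∑ μ, j0 μ * (ai μ / (ki μ - km)) * (aj μ / (kj μ - ki μ)) *
          ((Real.exp (-km * (t - t0)) - Real.exp (-ki μ * (t - t0)))
            - ((ki μ - km) / (kj μ - km)) *
              (Real.exp (-km * (t - t0)) - Real.exp (-kj μ * (t - t0)))))
    (t : ℝ) (ht : t0 ≤ t) :
    m t ≤
      m0 * Real.exp (-km * (t - t0))
      + ∑ ν, e0 ν * (ae ν / (ke ν - km)) *
          (Real.exp (-km * (t - t0)) - Real.exp (-ke ν * (t - t0)))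
      + ∑ μ, i0 μ * (ai μ / (ki μ - km)) *
          (Real.exp (-km * (t - t0)) - Real.exp (-ki μ * (t - t0))) := by
  rw [hm t]
  have hΔ : 0 ≤ t - t0 := sub_nonneg.mpr ht
  have hsum : (∑ μ, j0 μ * (ai μ / (ki μ - km)) * (aj μ / (kj μ - ki μ)) *
      ((Real.exp (-km * (t - t0)) - Real.exp (-ki μ * (t - t0)))
        - ((ki μ - km) / (kj μ - km)) *
          (Real.exp (-km * (t - t0)) - Real.exp (-kj μ * (t - t0))))) ≤ 0 := by
    apply Finset.sum_nonpos
    intro μ _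
    have ha : ki μ - km ≠ 0 := sub_ne_zero.mpr (hkim μ)
    have hb : kj μ - km ≠ 0 := sub_ne_zero.mpr (hkjm μ)
    have hd : 0 < kj μ - ki μ := sub_pos.mpr (hkij μ)
    have hD : (Real.exp (-km * (t - t0)) - Real.exp (-kj μ * (t - t0))) / (kj μ - km) ≤
        (Real.exp (-km * (t - t0)) - Real.exp (-ki μ * (t - t0))) / (ki μ - km) := by
      have h := aux_bracket km (ki μ - km) (kj μ - km) (t - t0) ha hb
        (by linarith [hkij μ]) hΔ
      have e1 : km + (ki μ - km) = ki μ := by ring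
      have e2 : km + (kj μ - km) = kj μ := by ring
      rwa [e1, e2] at h
    have heq : j0 μ * (ai μ / (ki μ - km)) * (aj μ / (kj μ - ki μ)) *
        ((Real.exp (-km * (t - t0)) - Real.exp (-ki μ * (t - t0)))
          - ((ki μ - km) / (kj μ - km)) *
            (Real.exp (-km * (t - t0)) - Real.exp (-kj μ * (t - t0))))
        = j0 μ * (ai μ * (aj μ / (kj μ - ki μ)) *
          ((Real.exp (-km * (t - t0)) - Real.exp (-ki μ * (t - t0))) / (ki μ - km)
            - (Real.exp (-km * (t - t0)) - Real.exp (-kj μ * (t - t0))) / (kj μ - km))) := by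
      field_simp
    rw [heq]
    apply mul_nonpos_of_nonpos_of_nonneg (hj0 μ)
    have h1 : 0 ≤ ai μ * (aj μ / (kj μ - ki μ)) := mul_nonneg (hai μ).le (div_nonneg (haj μ).le hd.le)
    exact mul_nonneg h1 (by linarith)
  linarith
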